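/- Every solution K for the instance (A, k) of Distinct Vectors constructed from φ consists exactly of the log₂(s+1) consistency columns together with, for each i ∈ [log₂ r], exactly one column from B_i's columns, and contains no other columns. -/

import Mathlib

/-!
The construction of the paper.  Rows and columns are 0-indexed here:
* `r ≥ 2` is a power of two, the number of variables of the CNF formula `φ`;
  variables are elements of `Fin r`; a literal is a variable plus a polarity.
* `s = 2 ^ ℓ - 1` (with `ℓ ≥ 1`) is the number of clauses; clause `q : Fin s`
  is the finite set `Clause q` of literals.
* `L = log₂ r` is the number of bundles; bundle `i` is a list `B i` of exactly
  `r' = ⌈r / log₂ r⌉` variables (with repetitions allowed), and every variable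
  occurs in exactly one bundle.
* For every bundle `i` there is a list of `ρ = 2 ^ r'` truth assignments
  `asg i p : Fin r → Bool` (`p : Fin ρ`, only the values on `B i`'s variables are
  relevant) containing every assignment of `B i`'s variables at least once.
* The matrix `A` has `n = ℓ + ρ * L` columns: the `ℓ` consistency columns
  `0, …, ℓ - 1`, followed, for each bundle `i`, by `B i`'s columns
  `ℓ + i * ρ, …, ℓ + (i + 1) * ρ - 1` (the `p`-th corresponding to assignment `p`).
* The matrix `A` has `m = 1 + L + 2 * s` rows: the all-zero row `0`, the bundle
  indicator rows `1, …, L` (row `i + 1` is `1` exactly on bundle `i`'s columns),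
  and, for each clause `q : Fin s`, the odd row `1 + L + 2 * q` (the `ℓ`-bit binary
  encoding of `q + 1` on the consistency columns and `sat_i(p, q)` on the `p`-th of
  bundle `i`'s columns) and the even row `1 + L + 2 * q + 1` (the encoding of `q + 1`
  on the consistency columns and `0` elsewhere).
* `k = ℓ + L`.  A solution is a set `K` of at most `k` columns such that the rows
  of `A` restricted to the columns in `K` are pairwise distinct.
-/

/-- A literal over variables `Fin r`: a variable together with a polarity. -/
structure DVLit (r : ℕ) where
  var : Fin r
  pos : Bool
deriving DecidableEq

/-- All the data of the construction: the CNF formula `φ` (variables, clauses),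
the bundles, and the lists of truth assignments of each bundle. -/
structure DVInstance where
  /-- number of variables -/
  r : ℕ
  hr : 2 ≤ r
  hrpow : ∃ t : ℕ, r = 2 ^ t
  ℓ : ℕ
  hℓ : 1 ≤ ℓ
  /-- number of clauses -/
  s : ℕ
  hs : s = 2 ^ ℓ - 1
  /-- the clauses of `φ` -/
  Clause : Fin s → Finset (DVLit r)
  /-- the bundles: lists of variables of length `r' = ⌈r / log₂ r⌉` -/
  B : Fin (Nat.log 2 r) → List (Fin r)
  hBlen : ∀ i, (B i).length = (r + Nat.log 2 r - 1) / Nat.log 2 r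
  /-- every variable occurs in exactly one bundle -/
  hBpart : ∀ v : Fin r, ∃! i, v ∈ B i
  /-- the list of `ρ = 2 ^ r'` truth assignments of each bundle -/
  asg : Fin (Nat.log 2 r) → Fin (2 ^ ((r + Nat.log 2 r - 1) / Nat.log 2 r)) →
    Fin r → Bool
  /-- every assignment of a bundle's variables occurs at least once in its list -/
  hasg : ∀ i, ∀ β : Fin r → Bool, ∃ p, ∀ v ∈ B i, asg i p v = β v

namespace DVInstance

variable (D : DVInstance)

/-- `L = log₂ r`, the number of bundles. -/
def L : ℕ := Nat.log 2 D.r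

/-- `r' = ⌈r / log₂ r⌉`, the size of each bundle. -/
def r' : ℕ := (D.r + D.L - 1) / D.L

/-- `ρ = 2 ^ r'`, the number of columns of each bundle. -/
def ρ : ℕ := 2 ^ D.r'

/-- the number `n = log₂(s + 1) + ρ * log₂ r` of columns of `A`. -/
def n : ℕ := D.ℓ + D.ρ * D.L

/-- the number `m = 1 + log₂ r + 2 * s` of rows of `A`. -/
def m : ℕ := 1 + D.L + 2 * D.s

/-- the budget `k = log₂(s + 1) + log₂ r`. -/
def k : ℕ := D.ℓ + D.L

/-- `sat_i(p, q)`: whether the `p`-th assignment of bundle `i` makes clause `q` true,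
i.e. whether some literal of clause `q` whose variable belongs to bundle `i` is set
to its polarity by the `p`-th assignment of bundle `i` (nat-indexed version;
`false` outside the index ranges). -/
def satN (i p q : ℕ) : Bool :=
  if h : i < D.L ∧ p < D.ρ ∧ q < D.s then
    decide (∃ lit ∈ D.Clause ⟨q, h.2.2⟩, lit.var ∈ D.B ⟨i, h.1⟩ ∧
      D.asg ⟨i, h.1⟩ ⟨p, h.2.1⟩ lit.var = lit.pos)
  else false

/-- The constructed binary matrix `A` (rows and columns 0-indexed;
entries outside the `m × n` range are irrelevant). -/
def A (row col : ℕ) : Bool :=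
  if row = 0 then
    -- the all-zero row
    false
  else if row ≤ D.L then
    -- bundle indicator rows: row `i + 1` is `1` exactly on bundle `i`'s columns
    decide (D.ℓ + (row - 1) * D.ρ ≤ col ∧ col < D.ℓ + row * D.ρ)
  else if col < D.ℓ then
    -- clause rows on the consistency columns: the binary encoding of the
    -- (1-indexed) clause number
    Nat.testBit ((row - D.L - 1) / 2 + 1) col
  else if (row - D.L - 1) % 2 = 0 then
    -- odd row of clause `q = (row - L - 1) / 2`: `sat_i(p, q)` on the `p`-th of
    -- bundle `i`'s columns
    D.satN ((col - D.ℓ) / D.ρ) ((col - D.ℓ) % D.ρ) ((row - D.L - 1) / 2)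
  else
    -- even row of clause `q`: zero outside the consistency columns
    false

/-- `K` is a solution for the instance `(A, k)`: a set of at most `k` columns of `A`
such that the rows of `A` restricted to the columns in `K` are pairwise distinct. -/
def Solution (K : Finset ℕ) : Prop :=
  (∀ c ∈ K, c < D.n) ∧ K.card ≤ D.k ∧
    ∀ i j, i < D.m → j < D.m → i ≠ j → ∃ c ∈ K, D.A i c ≠ D.A j c

end DVInstance

/-- Every solution `K` for the constructed instance `(A, k)` consists
exactly of the `log₂(s + 1) = ℓ` consistency columns together with, for each bundle
`i`, exactly one column among `B i`'s columns, and nothing else. -/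
theorem solution_structure (D : DVInstance) (K : Finset ℕ) (hK : D.Solution K) :
    ∃ f : Fin D.L → ℕ,
      (∀ i, D.ℓ + i.val * D.ρ ≤ f i ∧ f i < D.ℓ + (i.val + 1) * D.ρ) ∧
      K = Finset.range D.ℓ ∪ Finset.image f Finset.univ := by
  obtain ⟨hKn, hKcard, hdist⟩ := hK
  have hρ : 0 < D.ρ := by unfold DVInstance.ρ; positivity
  have hA0 : ∀ c, D.A 0 c = false := by intro c; simp [DVInstance.A]
  -- Step 1: all consistency columns are in K
  have hcons : ∀ c < D.ℓ, c ∈ K := by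
    intro c hc
    have hpow : 2 ^ c ≤ D.s := by
      rw [D.hs]
      have h1 : 2 ^ c ≤ 2 ^ (D.ℓ - 1) := Nat.pow_le_pow_right (by norm_num) (by omega)
      have h2 : 2 ^ D.ℓ = 2 * 2 ^ (D.ℓ - 1) := by
        rw [← pow_succ']
        congr 1
        omega
      have h3 : 1 ≤ 2 ^ (D.ℓ - 1) := Nat.one_le_two_pow
      omega
    set q := 2 ^ c - 1 with hq
    have hqs : q < D.s := by
      have : 1 ≤ 2 ^ c := Nat.one_le_two_pow
      omega
    obtain ⟨c', hc'K, hne⟩ := hdist 0 (1 + D.L + 2 * q + 1)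
      (by unfold DVInstance.m; omega) (by unfold DVInstance.m; omega) (by omega)
    rw [hA0] at hne
    have hrowval : D.A (1 + D.L + 2 * q + 1) c' =
        if c' < D.ℓ then Nat.testBit (q + 1) c' else false := by
      unfold DVInstance.A
      rw [if_neg (by omega), if_neg (by omega)]
      have e1 : 1 + D.L + 2 * q + 1 - D.L - 1 = 2 * q + 1 := by omega
      rw [e1]
      have e2 : (2 * q + 1) / 2 = q := by omega
      have e3 : (2 * q + 1) % 2 = 1 := by omega
      rw [e2, e3]
      split
      · rfl
      · simp
    rw [hrowval] at hne
    by_cases hlt : c' < D.ℓ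
    · rw [if_pos hlt] at hne
      have hq1 : q + 1 = 2 ^ c := by
        have : 1 ≤ 2 ^ c := Nat.one_le_two_pow
        omega
      rw [hq1] at hne
      have : Nat.testBit (2 ^ c) c' = true := by
        cases h : Nat.testBit (2 ^ c) c'
        · rw [h] at hne; simp at hne
        · rfl
      rw [Nat.testBit_two_pow] at this
      have hcc : c = c' := by simpa using this
      rwa [← hcc] at hc'K
    · rw [if_neg hlt] at hne; simp at hne
  -- Step 2: each bundle contributes at least one column
  have hbundle : ∀ i : Fin D.L, ∃ c, c ∈ K ∧
      D.ℓ + i.val * D.ρ ≤ c ∧ c < D.ℓ + (i.val + 1) * D.ρ := by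
    intro i
    obtain ⟨c, hcK, hne⟩ := hdist 0 (i.val + 1)
      (by unfold DVInstance.m; omega)
      (by unfold DVInstance.m; have := i.isLt; omega) (by omega)
    refine ⟨c, hcK, ?_⟩
    rw [hA0] at hne
    have h1 : D.A (i.val + 1) c =
        decide (D.ℓ + i.val * D.ρ ≤ c ∧ c < D.ℓ + (i.val + 1) * D.ρ) := by
      unfold DVInstance.A
      rw [if_neg (by omega), if_pos (by have := i.isLt; omega)]
      simp
    rw [h1] at hne
    simpa using hne
  choose f hfK hfb using hbundle
  refine ⟨f, hfb, ?_⟩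
  -- the candidate set
  set S : Finset ℕ := Finset.range D.ℓ ∪ Finset.image f Finset.univ with hS
  have hsub : S ⊆ K := by
    intro c hcS
    rw [hS, Finset.mem_union] at hcS
    rcases hcS with h | h
    · exact hcons c (Finset.mem_range.mp h)
    · obtain ⟨i, _, rfl⟩ := Finset.mem_image.mp h
      exact hfK i
  have hinj : Function.Injective f := by
    intro i j hij
    obtain ⟨hi1, hi2⟩ := hfb i
    obtain ⟨hj1, hj2⟩ := hfb j
    rw [hij] at hi1 hi2
    have h1 : i.val * D.ρ < (j.val + 1) * D.ρ := by omega
    have h2 : j.val * D.ρ < (i.val + 1) * D.ρ := by omega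
    have h1' : i.val < j.val + 1 := Nat.lt_of_mul_lt_mul_right h1
    have h2' : j.val < i.val + 1 := Nat.lt_of_mul_lt_mul_right h2
    exact Fin.ext (by omega)
  have hdisj : Disjoint (Finset.range D.ℓ) (Finset.image f Finset.univ) := by
    rw [Finset.disjoint_left]
    intro c hc hcim
    obtain ⟨i, _, rfl⟩ := Finset.mem_image.mp hcim
    have := (hfb i).1
    have := Finset.mem_range.mp hc
    omega
  have hScard : S.card = D.ℓ + D.L := by
    rw [hS, Finset.card_union_of_disjoint hdisj, Finset.card_range,
      Finset.card_image_of_injective _ hinj]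
    simp
  have hKS : K = S := by
    refine (Finset.eq_of_subset_of_card_le hsub ?_).symm
    rw [hScard]
    exact hKcard
  exact hKS
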